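/- arXiv:2310.18074 — 2 statements merged into one kernel-verified Lean document; each statement's English description precedes it below -/
import Mathlib

section
/- Let k : 𝒳 × 𝒳 → ℝ be a kernel with RKHS H_k, f : 𝒳 → ℝ with 𝒩(f,k) < ∞ (the supremum of the quotients 𝒟(x,α,f,k) over all finite tuples). Then the map ℓ_f on the pre-Hilbert space span{k(·,x) : x ∈ 𝒳} sending ∑_n α_n k(·,x_n) to ∑_n α_n f(x_n) is well-defined (independent of the representation), linear, and bounded with operator norm at most 𝒩(f,k). -/
open scoped RealInnerProductSpace

/-- The quotient `𝒟` with the conventions `0/0 = 0` and `c/0 = +∞` for `c ≠ 0`. -/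
noncomputable def Dquot (E W : ℝ) : EReal :=
  if W = 0 then (if E = 0 then 0 else ⊤) else ((E / W : ℝ) : EReal)

/-- `𝒩(f,k)`: the supremum over all finite tuples of the quotients `𝒟(x,α,f,k)`. -/
noncomputable def Nq {𝒳 : Type*} (k : 𝒳 → 𝒳 → ℝ) (f : 𝒳 → ℝ) : EReal :=
  ⨆ (N : ℕ) (_ : 0 < N) (x : Fin N → 𝒳) (α : Fin N → ℝ),
    Dquot (∑ n, α n * f (x n)) (Real.sqrt (∑ i, ∑ j, α i * α j * k (x j) (x i)))

section Aux

variable {𝒳 : Type*} [Nonempty 𝒳]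
    {H : Type*} [NormedAddCommGroup H] [InnerProductSpace ℝ H]
    (Φ : 𝒳 → H) (k : 𝒳 → 𝒳 → ℝ) (f : 𝒳 → ℝ)

lemma Nq_nonneg : (0 : EReal) ≤ Nq k f := by
  obtain ⟨x0⟩ := ‹Nonempty 𝒳›
  have h0 : Dquot (∑ n : Fin 1, (fun _ : Fin 1 => (0:ℝ)) n * f ((fun _ : Fin 1 => x0) n))
      (Real.sqrt (∑ i : Fin 1, ∑ j : Fin 1,
        (fun _ : Fin 1 => (0:ℝ)) i * (fun _ : Fin 1 => (0:ℝ)) j *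
          k ((fun _ : Fin 1 => x0) j) ((fun _ : Fin 1 => x0) i))) = 0 := by
    simp [Dquot]
  calc (0 : EReal) = _ := h0.symm
    _ ≤ Nq k f :=
      le_iSup_of_le 1 (le_iSup_of_le one_pos
        (le_iSup_of_le (fun _ => x0) (le_iSup_of_le (fun _ => 0) le_rfl)))

lemma key_one (hk : ∀ x y, k x y = ⟪Φ x, Φ y⟫) (hN : Nq k f < ⊤)
    (N : ℕ) (x : Fin N → 𝒳) (α : Fin N → ℝ) :
    ∑ n, α n * f (x n) ≤ (Nq k f).toReal * ‖∑ n, α n • Φ (x n)‖ := by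
  have hC : 0 ≤ (Nq k f).toReal := by
    have := EReal.toReal_le_toReal (Nq_nonneg k f) (by simp) (ne_of_lt hN)
    simpa using this
  rcases Nat.eq_zero_or_pos N with h0 | hpos
  · subst h0
    simp [mul_nonneg hC (norm_nonneg _)]
  · set v := ∑ n, α n • Φ (x n) with hv
    have hgram : ∑ i, ∑ j, α i * α j * k (x j) (x i) = ⟪v, v⟫ := by
      simp only [hv, sum_inner, inner_sum, real_inner_smul_left, real_inner_smul_right, hk,
        Finset.mul_sum]
      rw [Finset.sum_comm]
      refine Finset.sum_congr rfl fun i _ => Finset.sum_congr rfl fun j _ => by rw [real_inner_comm]; ring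
    have hsqrt : Real.sqrt (∑ i, ∑ j, α i * α j * k (x j) (x i)) = ‖v‖ := by
      rw [hgram, real_inner_self_eq_norm_sq, Real.sqrt_sq (norm_nonneg v)]
    have hle : Dquot (∑ n, α n * f (x n)) ‖v‖ ≤ Nq k f := by
      have h := le_iSup_of_le (f := fun N : ℕ => ⨆ (_ : 0 < N) (x : Fin N → 𝒳) (α : Fin N → ℝ),
          Dquot (∑ n, α n * f (x n)) (Real.sqrt (∑ i, ∑ j, α i * α j * k (x j) (x i)))) N
          (le_iSup_of_le hpos (le_iSup_of_le x (le_iSup_of_le α le_rfl)))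
      rw [hsqrt] at h
      exact h
    by_cases hv0 : ‖v‖ = 0
    · have hE0 : ∑ n, α n * f (x n) = 0 := by
        by_contra hne
        rw [Dquot, if_pos hv0, if_neg hne] at hle
        exact absurd (top_le_iff.mp hle) (by exact fun h => absurd h (ne_of_lt hN))
      rw [hE0, hv0, mul_zero]
    · rw [Dquot, if_neg hv0] at hle
      have hNbot : Nq k f ≠ ⊥ := ne_bot_of_le_ne_bot (by simp) (Nq_nonneg k f)
      rw [(EReal.coe_toReal (ne_of_lt hN) hNbot).symm, EReal.coe_le_coe_iff] at hle
      have hvpos : 0 < ‖v‖ := lt_of_le_of_ne (norm_nonneg v) (Ne.symm hv0)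
      calc ∑ n, α n * f (x n) = (∑ n, α n * f (x n)) / ‖v‖ * ‖v‖ := by field_simp
        _ ≤ (Nq k f).toReal * ‖v‖ := mul_le_mul_of_nonneg_right hle hvpos.le

lemma key_abs (hk : ∀ x y, k x y = ⟪Φ x, Φ y⟫) (hN : Nq k f < ⊤)
    (N : ℕ) (x : Fin N → 𝒳) (α : Fin N → ℝ) :
    |∑ n, α n * f (x n)| ≤ (Nq k f).toReal * ‖∑ n, α n • Φ (x n)‖ := by
  refine abs_le.mpr ⟨?_, key_one Φ k f hk hN N x α⟩
  have h2 := key_one Φ k f hk hN N x (fun n => -α n)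
  simp only [neg_mul, neg_smul, Finset.sum_neg_distrib, norm_neg] at h2
  linarith

lemma key_fintype (hk : ∀ x y, k x y = ⟪Φ x, Φ y⟫) (hN : Nq k f < ⊤)
    {ι : Type*} [Fintype ι] (x : ι → 𝒳) (α : ι → ℝ) :
    |∑ i, α i * f (x i)| ≤ (Nq k f).toReal * ‖∑ i, α i • Φ (x i)‖ := by
  have e := Fintype.equivFin ι
  have h1 : ∑ i, α i * f (x i) = ∑ j, α (e.symm j) * f (x (e.symm j)) :=
    (Equiv.sum_comp e.symm fun i => α i * f (x i)).symm
  have h2 : ∑ i, α i • Φ (x i) = ∑ j, α (e.symm j) • Φ (x (e.symm j)) :=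
    (Equiv.sum_comp e.symm fun i => α i • Φ (x i)).symm
  rw [h1, h2]
  exact key_abs Φ k f hk hN _ _ _

lemma key_finsupp (hk : ∀ x y, k x y = ⟪Φ x, Φ y⟫) (hN : Nq k f < ⊤)
    (c : 𝒳 →₀ ℝ) :
    |Finsupp.linearCombination ℝ f c| ≤
      (Nq k f).toReal * ‖Finsupp.linearCombination ℝ Φ c‖ := by
  have h := key_fintype Φ k f hk hN (fun a : ↥c.support => (a : 𝒳)) (fun a => c a)
  rw [Finset.sum_coe_sort c.support (fun a => c a * f a),
    Finset.sum_coe_sort c.support (fun a => c a • Φ a)] at h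
  rw [Finsupp.linearCombination_apply, Finsupp.linearCombination_apply, Finsupp.sum, Finsupp.sum]
  simpa [smul_eq_mul] using h

lemma welldef_finsupp (hk : ∀ x y, k x y = ⟪Φ x, Φ y⟫) (hN : Nq k f < ⊤)
    {c c' : 𝒳 →₀ ℝ}
    (h : Finsupp.linearCombination ℝ Φ c = Finsupp.linearCombination ℝ Φ c') :
    Finsupp.linearCombination ℝ f c = Finsupp.linearCombination ℝ f c' := by
  have hb := key_finsupp Φ k f hk hN (c - c')
  rw [map_sub, map_sub, h, sub_self, norm_zero, mul_zero] at hb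
  have := abs_nonpos_iff.mp hb
  linarith [sub_eq_zero.mp this]

omit [Nonempty 𝒳] in
lemma tuple_finsupp_f (N : ℕ) (x : Fin N → 𝒳) (α : Fin N → ℝ) :
    Finsupp.linearCombination ℝ f (∑ n, Finsupp.single (x n) (α n)) = ∑ n, α n * f (x n) := by
  rw [map_sum]
  simp [Finsupp.linearCombination_single, smul_eq_mul]

omit [Nonempty 𝒳] in
lemma tuple_finsupp_Phi (N : ℕ) (x : Fin N → 𝒳) (α : Fin N → ℝ) :
    Finsupp.linearCombination ℝ Φ (∑ n, Finsupp.single (x n) (α n)) = ∑ n, α n • Φ (x n) := by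
  rw [map_sum]
  simp [Finsupp.linearCombination_single]

end Aux

/-- If `𝒩(f,k) < ∞`, then `ℓ_f : ∑ₙ αₙ k(·,xₙ) ↦ ∑ₙ αₙ f(xₙ)` is well-defined
(independent of the representation), linear, and bounded on the pre-Hilbert space
`span{k(·,x) : x ∈ 𝒳}` (realized as `span(range Φ)`), with operator norm at most `𝒩(f,k)`. -/
theorem prelinear_functional_well_defined {𝒳 : Type*} [Nonempty 𝒳]
    {H : Type*} [NormedAddCommGroup H] [InnerProductSpace ℝ H] [CompleteSpace H]
    (Φ : 𝒳 → H) (k : 𝒳 → 𝒳 → ℝ) (hk : ∀ x y, k x y = ⟪Φ x, Φ y⟫)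
    (f : 𝒳 → ℝ) (hN : Nq k f < ⊤) :
    -- well-definedness: equal representations give equal values
    (∀ (N M : ℕ) (x : Fin N → 𝒳) (α : Fin N → ℝ) (y : Fin M → 𝒳) (β : Fin M → ℝ),
        (∀ t : 𝒳, ∑ n, α n * k t (x n) = ∑ m, β m * k t (y m)) →
        ∑ n, α n * f (x n) = ∑ m, β m * f (y m)) ∧
    -- existence of the linear bounded functional `ℓ_f` on the pre-space
    ∃ ℓ : Submodule.span ℝ (Set.range Φ) →ₗ[ℝ] ℝ,
      (∀ (u : Submodule.span ℝ (Set.range Φ)) (N : ℕ) (x : Fin N → 𝒳) (α : Fin N → ℝ),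
        (u : H) = ∑ n, α n • Φ (x n) → ℓ u = ∑ n, α n * f (x n)) ∧
      (∀ u : Submodule.span ℝ (Set.range Φ), |ℓ u| ≤ (Nq k f).toReal * ‖(u : H)‖) := by
  classical
  -- a chosen finsupp representation for each element of the span
  have hmem : ∀ u : Submodule.span ℝ (Set.range Φ),
      ∃ c : 𝒳 →₀ ℝ, Finsupp.linearCombination ℝ Φ c = (u : H) := by
    intro u
    obtain ⟨c, hc⟩ := Finsupp.mem_span_range_iff_exists_finsupp.mp u.2
    exact ⟨c, by rw [Finsupp.linearCombination_apply]; exact hc⟩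
  set rep : Submodule.span ℝ (Set.range Φ) → (𝒳 →₀ ℝ) := fun u => (hmem u).choose with hrep
  have hrepeq : ∀ u, Finsupp.linearCombination ℝ Φ (rep u) = (u : H) :=
    fun u => (hmem u).choose_spec
  constructor
  · intro N M x α y β h
    set v := ∑ n, α n • Φ (x n) with hv
    set w := ∑ m, β m • Φ (y m) with hw
    have hinner : ∀ t, ⟪Φ t, v⟫ = ⟪Φ t, w⟫ := by
      intro t
      have ht := h t
      simp only [hk] at ht
      rw [hv, hw, inner_sum, inner_sum]
      simpa [real_inner_smul_right] using ht
    have ht0 : ∀ t, ⟪Φ t, v - w⟫ = 0 := fun t => by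
      rw [inner_sub_right, hinner t, sub_self]
    have hvvw : ⟪v, v - w⟫ = 0 := by
      rw [hv, sum_inner]
      simp [real_inner_smul_left, ht0, ← hv]
    have hwvw : ⟪w, v - w⟫ = 0 := by
      rw [hw, sum_inner]
      simp [real_inner_smul_left, ht0, ← hw]
    have hvw : v = w := by
      have : ⟪v - w, v - w⟫ = 0 := by rw [inner_sub_left, hvvw, hwvw, sub_self]
      exact sub_eq_zero.mp (inner_self_eq_zero.mp this)
    -- combine the two representations into one finsupp and use the bound
    have hfe := welldef_finsupp Φ k f hk hN
      (c := ∑ n, Finsupp.single (x n) (α n)) (c' := ∑ m, Finsupp.single (y m) (β m))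
      (by rw [tuple_finsupp_Phi, tuple_finsupp_Phi, ← hv, ← hw, hvw])
    rwa [tuple_finsupp_f, tuple_finsupp_f] at hfe
  · refine ⟨{ toFun := fun u => Finsupp.linearCombination ℝ f (rep u)
              map_add' := ?_
              map_smul' := ?_ }, ?_, ?_⟩
    · intro u v
      show Finsupp.linearCombination ℝ f (rep (u + v)) =
        Finsupp.linearCombination ℝ f (rep u) + Finsupp.linearCombination ℝ f (rep v)
      have : Finsupp.linearCombination ℝ f (rep (u + v)) =
          Finsupp.linearCombination ℝ f (rep u + rep v) := by
        apply welldef_finsupp Φ k f hk hN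
        rw [map_add, hrepeq, hrepeq, hrepeq]
        rfl
      rw [this, map_add]
    · intro r u
      show Finsupp.linearCombination ℝ f (rep (r • u)) =
        r * Finsupp.linearCombination ℝ f (rep u)
      have : Finsupp.linearCombination ℝ f (rep (r • u)) =
          Finsupp.linearCombination ℝ f (r • rep u) := by
        apply welldef_finsupp Φ k f hk hN
        rw [map_smul, hrepeq, hrepeq]
        rfl
      rw [this, map_smul, smul_eq_mul]
    · intro u N x α hu
      have : Finsupp.linearCombination ℝ f (rep u) =
          Finsupp.linearCombination ℝ f (∑ n, Finsupp.single (x n) (α n)) := by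
        apply welldef_finsupp Φ k f hk hN
        rw [tuple_finsupp_Phi, hrepeq, hu]
      simpa [tuple_finsupp_f] using this
    · intro u
      have h := key_finsupp Φ k f hk hN (rep u)
      rwa [hrepeq] at h
end

section
/- Let X be a compact metric space, (k_M) kernels on X^M converging in mean field to a continuous kernel k on P(X) (i.e., sup_{x,x' ∈ X^M} |k_M(x,x') − k(μ̂[x],μ̂[x'])| → 0), with all k_M and k bounded and Lipschitz with respect to the metric induced by empirical measures. Let f_M ∈ H_{k_M} with ‖f_M‖_{k_M} ≤ B for all M and suppose f_M converges in mean field to a continuous function f : P(X) → ℝ (i.e., sup_{x ∈ X^M}|f_M(x) − f(μ̂[x])| → 0). Then f belongs to the RKHS H_k of k and ‖f‖_k ≤ B. -/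
open MeasureTheory Filter
open scoped ENNReal RealInnerProductSpace

/-- Kantorovich–Rubinstein metric: `d_KR(μ,ν) = sup{∫φ dμ − ∫φ dν : φ 1-Lipschitz}`. -/
noncomputable def dKR {X : Type*} [MeasurableSpace X] [MetricSpace X] (μ ν : Measure X) : ℝ :=
  ⨆ φ : {f : X → ℝ // LipschitzWith 1 f}, (∫ x, φ.1 x ∂μ - ∫ x, φ.1 x ∂ν)

/-- The empirical measure `(1/M) ∑ᵢ δ_{xᵢ}` of a tuple `x ∈ X^M`. -/
noncomputable def empMeasure {X : Type*} [MeasurableSpace X] {M : ℕ} (x : Fin M → X) : Measure X :=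
  ((M : ℝ≥0∞)⁻¹) • ∑ i, Measure.dirac (x i)

theorem empMeasure_prob {X : Type*} [MeasurableSpace X] {M : ℕ} (x : Fin (M + 1) → X) :
    IsProbabilityMeasure (empMeasure x) := by
  constructor
  simp only [empMeasure, Measure.smul_apply, smul_eq_mul]
  rw [Measure.coe_finset_sum]
  simp only [Finset.sum_apply, measure_univ, Finset.sum_const, Finset.card_univ,
    Fintype.card_fin, nsmul_eq_mul, mul_one]
  exact ENNReal.inv_mul_cancel (by exact_mod_cast Nat.succ_ne_zero M) (by simp)

/-- The empirical measure of a (nonempty) tuple, as a probability measure. -/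
noncomputable def empProb {X : Type*} [MeasurableSpace X] {M : ℕ} (x : Fin (M + 1) → X) :
    ProbabilityMeasure X :=
  ⟨empMeasure x, empMeasure_prob x⟩

open scoped NNReal
set_option maxHeartbeats 1000000
section Basic
set_option linter.unusedSectionVars false
variable {X : Type*} [MetricSpace X] [CompactSpace X] [Nonempty X] [MeasurableSpace X] [BorelSpace X]

lemma cont_integrable {φ : X → ℝ} (hφ : Continuous φ) (μ : Measure X) [IsFiniteMeasure μ] :
    Integrable φ μ := by
  have := hφ.continuousOn.integrableOn_compact (μ := μ) (isCompact_univ (X := X))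
  rwa [integrableOn_univ] at this

lemma diff_le_two_diam (μ ν : Measure X) [IsProbabilityMeasure μ] [IsProbabilityMeasure ν]
    {φ : X → ℝ} (hφ : LipschitzWith 1 φ) :
    ∫ x, φ x ∂μ - ∫ x, φ x ∂ν ≤ 2 * Metric.diam (Set.univ : Set X) := by
  obtain ⟨y₀⟩ := ‹Nonempty X›
  set D := Metric.diam (Set.univ : Set X) with hD
  have hb : Bornology.IsBounded (Set.univ : Set X) := isCompact_univ.isBounded
  have key : ∀ x y : X, φ x - φ y ≤ D := by
    intro x y
    have h1 : dist (φ x) (φ y) ≤ 1 * dist x y := hφ.dist_le_mul x y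
    have h2 : dist x y ≤ D := Metric.dist_le_diam_of_mem hb trivial trivial
    calc φ x - φ y ≤ |φ x - φ y| := le_abs_self _
    _ = dist (φ x) (φ y) := (Real.dist_eq _ _).symm
    _ ≤ D := by linarith
  have h1 : ∫ x, φ x ∂μ ≤ φ y₀ + D := by
    calc ∫ x, φ x ∂μ ≤ ∫ _, (φ y₀ + D) ∂μ := by
          apply integral_mono (cont_integrable hφ.continuous μ) (integrable_const _)
          intro x; have := key x y₀; simp; linarith
    _ = φ y₀ + D := by simp
  have h2 : φ y₀ - D ≤ ∫ x, φ x ∂ν := by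
    calc (φ y₀ - D : ℝ) = ∫ _, (φ y₀ - D) ∂ν := by simp
    _ ≤ ∫ x, φ x ∂ν := by
          apply integral_mono (integrable_const _) (cont_integrable hφ.continuous ν)
          intro x; have := key y₀ x; simp; linarith
  linarith

lemma dKR_bddAbove (μ ν : Measure X) [IsProbabilityMeasure μ] [IsProbabilityMeasure ν] :
    BddAbove (Set.range fun φ : {f : X → ℝ // LipschitzWith 1 f} =>
      (∫ x, φ.1 x ∂μ - ∫ x, φ.1 x ∂ν)) := by
  refine ⟨2 * Metric.diam (Set.univ : Set X), ?_⟩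
  rintro r ⟨φ, rfl⟩
  exact diff_le_two_diam μ ν φ.2

lemma le_dKR (μ ν : Measure X) [IsProbabilityMeasure μ] [IsProbabilityMeasure ν]
    {φ : X → ℝ} (hφ : LipschitzWith 1 φ) :
    ∫ x, φ x ∂μ - ∫ x, φ x ∂ν ≤ dKR μ ν :=
  le_ciSup (dKR_bddAbove μ ν) (⟨φ, hφ⟩ : {f : X → ℝ // LipschitzWith 1 f})

lemma abs_le_dKR (μ ν : Measure X) [IsProbabilityMeasure μ] [IsProbabilityMeasure ν]
    {φ : X → ℝ} (hφ : LipschitzWith 1 φ) :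
    |∫ x, φ x ∂μ - ∫ x, φ x ∂ν| ≤ dKR μ ν := by
  rw [abs_le']
  constructor
  · exact le_dKR μ ν hφ
  · have := le_dKR μ ν (hφ.neg (α := X))
    simp only [Pi.neg_apply, integral_neg] at this
    linarith

lemma dKR_nonneg (μ ν : Measure X) [IsProbabilityMeasure μ] [IsProbabilityMeasure ν] :
    0 ≤ dKR μ ν := by
  have := le_dKR μ ν (φ := fun _ => (0:ℝ)) ((LipschitzWith.const 0).weaken zero_le_one)
  simpa using this

end Basic
section SW
variable {X : Type*} [MetricSpace X] [CompactSpace X] [Nonempty X]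

lemma lip_mul {f g : X → ℝ} {Kf Kg : ℝ≥0} (hf : LipschitzWith Kf f) (hg : LipschitzWith Kg g)
    {Cf Cg : ℝ} (hCf : ∀ x, |f x| ≤ Cf) (hCg : ∀ x, |g x| ≤ Cg) :
    ∃ K : ℝ≥0, LipschitzWith K (f * g) := by
  have hCf0 : 0 ≤ Cf := le_trans (abs_nonneg _) (hCf (Classical.arbitrary X))
  have hCg0 : 0 ≤ Cg := le_trans (abs_nonneg _) (hCg (Classical.arbitrary X))
  refine ⟨⟨Cf, hCf0⟩ * Kg + ⟨Cg, hCg0⟩ * Kf, LipschitzWith.of_dist_le_mul fun x y => ?_⟩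
  have h1 : dist (f x * g x) (f y * g y) ≤ |f x| * dist (g x) (g y) + |g y| * dist (f x) (f y) := by
    simp only [Real.dist_eq]
    calc |f x * g x - f y * g y| = |f x * (g x - g y) + g y * (f x - f y)| := by ring_nf
    _ ≤ |f x * (g x - g y)| + |g y * (f x - f y)| := abs_add_le _ _
    _ = |f x| * |g x - g y| + |g y| * |f x - f y| := by rw [abs_mul, abs_mul]
  have h2 := hf.dist_le_mul x y
  have h3 := hg.dist_le_mul x y
  have := hCf x; have := hCg y
  have hdg : (0:ℝ) ≤ dist (g x) (g y) := dist_nonneg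
  have hdf : (0:ℝ) ≤ dist (f x) (f y) := dist_nonneg
  have hd : (0:ℝ) ≤ dist x y := dist_nonneg
  simp only [Pi.mul_apply]
  push_cast
  calc dist (f x * g x) (f y * g y) ≤ |f x| * dist (g x) (g y) + |g y| * dist (f x) (f y) := h1
  _ ≤ Cf * (Kg * dist x y) + Cg * (Kf * dist x y) := by
      apply add_le_add
      · exact mul_le_mul (hCf x) h3 hdg hCf0
      · exact mul_le_mul (hCg y) h2 hdf hCg0
  _ = (Cf * Kg + Cg * Kf) * dist x y := by ring

/-- The subalgebra of Lipschitz functions. -/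
noncomputable def lipAlg (X : Type*) [MetricSpace X] [CompactSpace X] [Nonempty X] :
    Subalgebra ℝ C(X, ℝ) where
  carrier := {g : C(X, ℝ) | ∃ K : ℝ≥0, LipschitzWith K g}
  mul_mem' := by
    rintro a b ⟨Ka, ha⟩ ⟨Kb, hb⟩
    have hca : ∀ x, |a x| ≤ ‖a‖ := fun x => by
      simpa [Real.norm_eq_abs] using a.norm_coe_le_norm x
    have hcb : ∀ x, |b x| ≤ ‖b‖ := fun x => by
      simpa [Real.norm_eq_abs] using b.norm_coe_le_norm x
    obtain ⟨K, hK⟩ := lip_mul ha hb hca hcb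
    exact ⟨K, by simpa using hK⟩
  add_mem' := by
    rintro a b ⟨Ka, ha⟩ ⟨Kb, hb⟩
    exact ⟨Ka + Kb, by rw [ContinuousMap.coe_add]; exact ha.add hb⟩
  algebraMap_mem' := by
    intro r
    exact ⟨0, by simpa using LipschitzWith.const (α := X) r⟩

lemma lipAlg_sep : (lipAlg X).SeparatesPoints := by
  intro x y hxy
  refine ⟨_, ⟨(⟨fun z => dist z x, by fun_prop⟩ : C(X,ℝ)), ⟨1, by simpa using LipschitzWith.dist_left x⟩, rfl⟩, ?_⟩
  simp only [ContinuousMap.coe_mk, dist_self]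
  exact fun h => hxy (dist_eq_zero.mp h.symm).symm

/-- Lipschitz approximation of continuous functions on compact spaces. -/
lemma lip_dense (g : X → ℝ) (hg : Continuous g) {ε : ℝ} (hε : 0 < ε) :
    ∃ (φ : X → ℝ) (K : ℝ≥0), LipschitzWith K φ ∧ ∀ x, |g x - φ x| ≤ ε := by
  have htop := ContinuousMap.subalgebra_topologicalClosure_eq_top_of_separatesPoints (lipAlg X) lipAlg_sep
  have hmem : (⟨g, hg⟩ : C(X,ℝ)) ∈ (lipAlg X).topologicalClosure := htop ▸ trivial
  have : (⟨g, hg⟩ : C(X,ℝ)) ∈ closure ((lipAlg X) : Set C(X,ℝ)) := hmem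
  rw [Metric.mem_closure_iff] at this
  obtain ⟨φ, hφA, hφd⟩ := this ε hε
  obtain ⟨K, hK⟩ := hφA
  refine ⟨φ, K, hK, fun x => ?_⟩
  have := ContinuousMap.dist_apply_le_dist (f := (⟨g, hg⟩ : C(X,ℝ))) (g := φ) x
  rw [Real.dist_eq] at this
  exact le_trans this (le_of_lt hφd)

end SW
section W
set_option linter.unusedSectionVars false
variable {X : Type*} [MetricSpace X] [CompactSpace X] [Nonempty X] [MeasurableSpace X] [BorelSpace X]

open scoped NNReal

lemma lip_integral_diff_le {φ : X → ℝ} {K : ℝ≥0} (hφ : LipschitzWith K φ)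
    (μ ν : ProbabilityMeasure X) :
    |∫ x, φ x ∂(μ : Measure X) - ∫ x, φ x ∂(ν : Measure X)| ≤ K * dKR (μ : Measure X) (ν : Measure X) := by
  rcases eq_or_ne K 0 with hK | hK
  · subst hK
    have : ∀ x y : X, φ x = φ y := by
      intro x y
      have := hφ.dist_le_mul x y
      simpa [dist_eq_zero] using this
    obtain ⟨y₀⟩ := ‹Nonempty X›
    have hconst : φ = fun _ => φ y₀ := funext fun x => this x y₀
    rw [hconst]
    simp
  · have hK' : (0:ℝ) < K := by
      have := K.2
      rcases this.lt_or_eq with h | h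
      · exact h
      · exact absurd (NNReal.coe_eq_zero.mp h.symm) hK
    set ψ : X → ℝ := fun x => (K:ℝ)⁻¹ * φ x with hψ
    have hψlip : LipschitzWith 1 ψ := by
      apply LipschitzWith.of_dist_le_mul
      intro x y
      have h1 := hφ.dist_le_mul x y
      simp only [hψ, Real.dist_eq, ← mul_sub, abs_mul,
        abs_of_nonneg (le_of_lt (inv_pos.mpr hK'))]
      rw [Real.dist_eq] at h1
      calc (K:ℝ)⁻¹ * |φ x - φ y| ≤ (K:ℝ)⁻¹ * ((K:ℝ) * dist x y) := by
            apply mul_le_mul_of_nonneg_left _ (le_of_lt (inv_pos.mpr hK'))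
            rw [← Real.dist_eq]; exact h1
      _ = dist x y := by field_simp
      _ ≤ 1 * dist x y := by rw [one_mul]
    have habs := abs_le_dKR (μ : Measure X) (ν : Measure X) hψlip
    have hint1 : ∫ x, ψ x ∂(μ : Measure X) = (K:ℝ)⁻¹ * ∫ x, φ x ∂(μ : Measure X) := by
      simp [hψ, integral_const_mul]
    have hint2 : ∫ x, ψ x ∂(ν : Measure X) = (K:ℝ)⁻¹ * ∫ x, φ x ∂(ν : Measure X) := by
      simp [hψ, integral_const_mul]
    rw [hint1, hint2, ← mul_sub, abs_mul,
      abs_of_nonneg (le_of_lt (inv_pos.mpr hK'))] at habs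
    calc |∫ x, φ x ∂(μ : Measure X) - ∫ x, φ x ∂(ν : Measure X)|
        = (K:ℝ) * ((K:ℝ)⁻¹ * |∫ x, φ x ∂(μ : Measure X) - ∫ x, φ x ∂(ν : Measure X)|) := by
          field_simp
    _ ≤ (K:ℝ) * dKR (μ : Measure X) (ν : Measure X) :=
          mul_le_mul_of_nonneg_left habs K.2

/-- dKR convergence implies weak convergence. -/
lemma tendsto_of_dKR {ν : ℕ → ProbabilityMeasure X} {μ : ProbabilityMeasure X}
    (h : Tendsto (fun n => dKR (ν n : Measure X) (μ : Measure X)) atTop (nhds 0)) :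
    Tendsto ν atTop (nhds μ) := by
  rw [MeasureTheory.ProbabilityMeasure.tendsto_iff_forall_integral_tendsto]
  intro g
  rw [Metric.tendsto_atTop]
  intro ε hε
  obtain ⟨φ, K, hK, hφ⟩ := lip_dense (g : X → ℝ) g.continuous (by positivity : (0:ℝ) < ε/4)
  have hKd : ∀ᶠ n in atTop, (K:ℝ) * dKR (ν n : Measure X) (μ : Measure X) < ε/4 := by
    have : Tendsto (fun n => (K:ℝ) * dKR (ν n : Measure X) (μ : Measure X)) atTop (nhds 0) := by
      simpa using h.const_mul (K:ℝ)
    exact (this.eventually (gt_mem_nhds (by positivity))).mono (fun n hn => hn)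
  rw [eventually_atTop] at hKd
  obtain ⟨N, hN⟩ := hKd
  refine ⟨N, fun n hn => ?_⟩
  have hint : ∀ (ρ : ProbabilityMeasure X),
      |∫ x, g x ∂(ρ : Measure X) - ∫ x, φ x ∂(ρ : Measure X)| ≤ ε/4 := by
    intro ρ
    rw [← integral_sub (cont_integrable g.continuous _) (cont_integrable hK.continuous _)]
    calc |∫ x, (g x - φ x) ∂(ρ : Measure X)| ≤ ∫ x, |g x - φ x| ∂(ρ : Measure X) := by
          simpa [Real.norm_eq_abs] using
            norm_integral_le_integral_norm (μ := (ρ : Measure X)) (f := fun x => g x - φ x)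
    _ ≤ ∫ _, (ε/4) ∂(ρ : Measure X) := by
        apply integral_mono _ (integrable_const _) hφ
        exact (cont_integrable (g.continuous.sub hK.continuous) _).abs
    _ = ε/4 := by simp
  have h1 := hint (ν n)
  have h2 := hint μ
  have h3 := lip_integral_diff_le hK (ν n) μ
  have h4 := hN n hn
  rw [Real.dist_eq]
  have habc : |∫ x, g x ∂(ν n : Measure X) - ∫ x, g x ∂(μ : Measure X)| ≤
      |∫ x, g x ∂(ν n : Measure X) - ∫ x, φ x ∂(ν n : Measure X)| +
      |∫ x, φ x ∂(ν n : Measure X) - ∫ x, φ x ∂(μ : Measure X)| +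
      |∫ x, φ x ∂(μ : Measure X) - ∫ x, g x ∂(μ : Measure X)| := by
    have t1 := abs_sub_le (∫ x, g x ∂(ν n : Measure X)) (∫ x, φ x ∂(ν n : Measure X))
      (∫ x, g x ∂(μ : Measure X))
    have t2 := abs_sub_le (∫ x, φ x ∂(ν n : Measure X)) (∫ x, φ x ∂(μ : Measure X))
      (∫ x, g x ∂(μ : Measure X))
    linarith
  rw [abs_sub_comm] at h2
  linarith

end W
section Part
variable {X : Type*} [MetricSpace X] [CompactSpace X] [Nonempty X] [MeasurableSpace X] [BorelSpace X]

open Classical in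
lemma exists_partition (r : ℝ) (hr : 0 < r) :
    ∃ (J : ℕ) (p : Fin J → X) (A : Fin J → Set X),
      0 < J ∧ (∀ j, MeasurableSet (A j)) ∧ (Pairwise (Function.onFun Disjoint A)) ∧
      (⋃ j, A j) = Set.univ ∧ ∀ j, A j ⊆ Metric.ball (p j) r := by
  obtain ⟨t, ht⟩ := isCompact_univ.elim_finite_subcover
    (fun y : X => Metric.ball y r) (fun y => Metric.isOpen_ball)
    (fun x _ => Set.mem_iUnion.mpr ⟨x, Metric.mem_ball_self hr⟩)
  set l := t.toList with hl
  set J := l.length with hJ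
  set p : Fin J → X := fun j => l.get j with hp
  set A : Fin J → Set X := fun j =>
    Metric.ball (p j) r \ ⋃ (i : Fin J) (_ : i < j), Metric.ball (p i) r with hA
  have hball : ∀ x : X, ∃ j : Fin J, x ∈ Metric.ball (p j) r := by
    intro x
    have := ht (Set.mem_univ x)
    rw [Set.mem_iUnion₂] at this
    obtain ⟨y, hyt, hxy⟩ := this
    have : y ∈ l := (Finset.mem_toList).mpr hyt
    obtain ⟨j, hj⟩ := List.mem_iff_get.mp this
    exact ⟨j, by simp only [hp]; rw [hj]; exact hxy⟩
  have hmeas : ∀ j, MeasurableSet (A j) := by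
    intro j
    exact (Metric.isOpen_ball.measurableSet).diff
      (MeasurableSet.iUnion fun i => MeasurableSet.iUnion fun _ => Metric.isOpen_ball.measurableSet)
  have hsub : ∀ j, A j ⊆ Metric.ball (p j) r := fun j => Set.diff_subset
  have key : ∀ i j : Fin J, i < j → Disjoint (A i) (A j) := by
    intro i j h
    rw [Set.disjoint_left]
    intro x hxi hxj
    have hb : x ∈ Metric.ball (p i) r := hsub i hxi
    exact hxj.2 (Set.mem_iUnion.mpr ⟨i, Set.mem_iUnion.mpr ⟨h, hb⟩⟩)
  have hdisj : Pairwise (Function.onFun Disjoint A) := by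
    intro i j hij
    rcases lt_or_gt_of_ne hij with h | h
    · exact key i j h
    · exact (key j i h).symm
  have huniv : (⋃ j, A j) = Set.univ := by
    apply Set.eq_univ_of_forall
    intro x
    obtain ⟨j₀, hj₀⟩ := hball x
    set s := Finset.univ.filter (fun j : Fin J => x ∈ Metric.ball (p j) r) with hs
    have hsne : s.Nonempty := ⟨j₀, by simp only [hs, Finset.mem_filter, Finset.mem_univ, true_and]; exact hj₀⟩
    set jm := s.min' hsne with hjm
    have hjmem : x ∈ Metric.ball (p jm) r := by
      have := s.min'_mem hsne
      simp [hs] at this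
      exact this
    refine Set.mem_iUnion.mpr ⟨jm, ⟨hjmem, ?_⟩⟩
    intro hmem
    rw [Set.mem_iUnion] at hmem
    obtain ⟨i, hi⟩ := hmem
    rw [Set.mem_iUnion] at hi
    obtain ⟨hilt, hib⟩ := hi
    have : jm ≤ i := s.min'_le i (by simp only [hs, Finset.mem_filter, Finset.mem_univ, true_and]; exact hib)
    exact absurd hilt (not_lt.mpr this)
  have hJ0 : 0 < J := by
    obtain ⟨j, _⟩ := hball (Classical.arbitrary X)
    exact j.pos
  exact ⟨J, p, A, hJ0, hmeas, hdisj, huniv, hsub⟩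

end Part
section Tuple
variable {X : Type*} [MetricSpace X] [CompactSpace X] [Nonempty X] [MeasurableSpace X] [BorelSpace X]


lemma exists_tuple {J : ℕ} (p : Fin J → X) (n : Fin J → ℕ) {M : ℕ} (hcard : ∑ j, n j = M + 1) :
    ∃ x : Fin (M + 1) → X, ∀ φ : X → ℝ, ∑ i, φ (x i) = ∑ j, (n j : ℝ) * φ (p j) := by
  classical
  set m : Multiset X := ∑ j, n j • ({p j} : Multiset X) with hm
  have hmc : Multiset.card m = M + 1 := by
    rw [hm, Multiset.card_sum]
    simpa using hcard
  set l := m.toList with hl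
  have hlen : l.length = M + 1 := by rw [hl, Multiset.length_toList, hmc]
  refine ⟨fun i => l.get (Fin.cast hlen.symm i), fun φ => ?_⟩
  have step1 : ∑ i : Fin (M + 1), φ (l.get (Fin.cast hlen.symm i)) =
      ∑ i : Fin l.length, φ (l.get i) :=
    Fin.sum_congr' (fun i => φ (l.get i)) hlen.symm
  have step2 : ∑ i : Fin l.length, φ (l.get i) = (l.map φ).sum := by
    calc ∑ i : Fin l.length, φ (l.get i) = (List.ofFn (fun i => φ (l.get i))).sum :=
          (List.sum_ofFn).symm
    _ = ((List.ofFn l.get).map φ).sum := by rw [List.map_ofFn]; rfl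
    _ = (l.map φ).sum := by rw [List.ofFn_get]
  have step3 : (l.map φ).sum = (m.map φ).sum := by
    conv_rhs => rw [← Multiset.coe_toList m]
    rw [Multiset.map_coe, Multiset.sum_coe]
  set h : Multiset X →+ ℝ := AddMonoidHom.mk' (fun s => (s.map φ).sum) (by
    intro a b; simp) with hh
  have step4 : (m.map φ).sum = ∑ j, ((n j • ({p j} : Multiset X)).map φ).sum := by
    have := map_sum h (fun j => n j • ({p j} : Multiset X)) Finset.univ
    simpa only [hh, AddMonoidHom.mk'_apply] using this
  have step5 : ∀ j, ((n j • ({p j} : Multiset X)).map φ).sum = (n j : ℝ) * φ (p j) := by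
    intro j
    rw [Multiset.map_nsmul]
    simp [Multiset.sum_nsmul, nsmul_eq_mul]
  rw [step1, step2, step3, step4]
  exact Finset.sum_congr rfl (fun j _ => step5 j)

lemma integral_empMeasure {M : ℕ} (x : Fin (M + 1) → X) {φ : X → ℝ} (hφ : Continuous φ) :
    ∫ y, φ y ∂(empMeasure x) = (M + 1 : ℝ)⁻¹ * ∑ i, φ (x i) := by
  rw [empMeasure, integral_smul_measure,
    integral_finset_sum_measure (fun i _ => cont_integrable hφ _)]
  simp only [integral_dirac, ENNReal.toReal_inv, smul_eq_mul]
  congr 1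
  rw [ENNReal.toReal_natCast]
  push_cast
  ring

end Tuple
section Emp
variable {X : Type*} [MetricSpace X] [CompactSpace X] [Nonempty X] [MeasurableSpace X] [BorelSpace X]

lemma emp_approx (μ : ProbabilityMeasure X) {δ : ℝ} (hδ : 0 < δ) :
    ∃ M₁ : ℕ, ∀ M ≥ M₁, ∃ x : Fin (M + 1) → X,
      dKR (empMeasure x) (μ : Measure X) ≤ δ := by
  classical
  obtain ⟨J, p, A, hJ0, hmeas, hdisj, huniv, hsub⟩ := exists_partition (X := X) (δ/2) (by linarith)
  set D := Metric.diam (Set.univ : Set X) with hD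
  have hD0 : 0 ≤ D := Metric.diam_nonneg
  set w : Fin J → ℝ := fun j => ((μ : Measure X) (A j)).toReal with hw
  have hw0 : ∀ j, 0 ≤ w j := fun j => ENNReal.toReal_nonneg
  have hwsum : ∑ j, w j = 1 := by
    have hμu : (μ : Measure X) Set.univ = 1 := measure_univ
    have h1 : (μ : Measure X) (⋃ j, A j) = ∑' j, (μ : Measure X) (A j) :=
      measure_iUnion hdisj hmeas
    rw [huniv, hμu] at h1
    have h2 : ∑' j, (μ : Measure X) (A j) = ∑ j, (μ : Measure X) (A j) := tsum_fintype _
    rw [h2] at h1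
    have h3 := congrArg ENNReal.toReal h1
    rw [ENNReal.toReal_sum ?fin] at h3
    case fin => exact fun j _ => measure_ne_top _ _
    · simpa [hw] using h3.symm
  set M₁ : ℕ := ⌈(4 * J * (D + 1)) / δ⌉₊ with hM₁
  refine ⟨M₁, fun M hM => ?_⟩
  -- counts
  set j₀ : Fin J := ⟨0, hJ0⟩ with hj₀
  set F : Fin J → ℕ := fun j => ⌊(M + 1 : ℝ) * w j⌋₊ with hF
  have hFle_r : ∀ j, (F j : ℝ) ≤ (M + 1 : ℝ) * w j := fun j =>
    Nat.floor_le (by positivity)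
  have hFgt : ∀ j, (M + 1 : ℝ) * w j < F j + 1 := fun j => Nat.lt_floor_add_one _
  have hsumFle : ∑ j, F j ≤ M + 1 := by
    have : ((∑ j, F j : ℕ) : ℝ) ≤ (M + 1 : ℝ) := by
      push_cast
      calc ∑ j, (F j : ℝ) ≤ ∑ j, (M + 1 : ℝ) * w j := Finset.sum_le_sum (fun j _ => hFle_r j)
      _ = (M + 1 : ℝ) * ∑ j, w j := by rw [Finset.mul_sum]
      _ = M + 1 := by rw [hwsum, mul_one]
    exact_mod_cast this
  set R : ℕ := (M + 1) - ∑ j, F j with hR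
  set n : Fin J → ℕ := fun j => F j + (if j = j₀ then R else 0) with hn
  have hncard : ∑ j, n j = M + 1 := by
    rw [hn]
    rw [Finset.sum_add_distrib]
    simp only [Finset.sum_ite_eq' Finset.univ j₀ (fun _ => R), Finset.mem_univ, if_true]
    rw [hR]
    omega
  have hRle : (R : ℝ) ≤ J := by
    have h1 : (M + 1 : ℝ) ≤ ∑ j, ((F j : ℝ) + 1) := by
      calc (M + 1 : ℝ) = (M + 1 : ℝ) * ∑ j, w j := by rw [hwsum, mul_one]
      _ = ∑ j, (M + 1 : ℝ) * w j := by rw [Finset.mul_sum]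
      _ ≤ ∑ j, ((F j : ℝ) + 1) := Finset.sum_le_sum (fun j _ => le_of_lt (hFgt j))
    rw [Finset.sum_add_distrib] at h1
    simp only [Finset.sum_const, Finset.card_univ, Fintype.card_fin, nsmul_eq_mul, mul_one] at h1
    have h2 : ((R : ℕ) : ℝ) = (M + 1 : ℝ) - ((∑ j, F j : ℕ) : ℝ) := by
      rw [hR]
      push_cast [Nat.cast_sub hsumFle]
      ring
    rw [h2]
    push_cast at h1 ⊢
    linarith
  -- the tuple
  obtain ⟨x, hx⟩ := exists_tuple p n hncard
  refine ⟨x, ?_⟩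
  have hpm : IsProbabilityMeasure (μ : Measure X) := μ.2
  -- key bound for each Lipschitz φ
  have key : ∀ φ : X → ℝ, LipschitzWith 1 φ →
      ∫ y, φ y ∂(empMeasure x) - ∫ y, φ y ∂(μ : Measure X) ≤ δ := by
    intro φ hφ
    have hcont : Continuous φ := hφ.continuous
    have hie : ∫ y, φ y ∂(empMeasure x) = ∑ j, ((n j : ℝ) / (M + 1)) * φ (p j) := by
      rw [integral_empMeasure x hcont, hx φ, Finset.mul_sum]
      exact Finset.sum_congr rfl (fun j _ => by ring)
    have hiμ : ∫ y, φ y ∂(μ : Measure X) = ∑ j, ∫ y in A j, φ y ∂(μ : Measure X) := by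
      have h1 : ∫ y in ⋃ j ∈ Finset.univ, A j, φ y ∂(μ : Measure X)
          = ∑ j, ∫ y in A j, φ y ∂(μ : Measure X) := by
        apply integral_biUnion_finset Finset.univ (fun j _ => hmeas j)
          (fun i _ j _ hij => hdisj hij)
        exact fun j _ => (cont_integrable hcont _).integrableOn
      have h2 : ⋃ j ∈ (Finset.univ : Finset (Fin J)), A j = Set.univ := by
        simpa using huniv
      rw [← h1, h2, setIntegral_univ]
    set Δ : Fin J → ℝ := fun j => (n j : ℝ) / (M + 1) - w j with hΔ
    have hΔsum : ∑ j, Δ j = 0 := by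
      simp only [hΔ]
      rw [Finset.sum_sub_distrib]
      rw [hwsum]
      rw [← Finset.sum_div]
      have : ∑ j, (n j : ℝ) = (M + 1 : ℝ) := by exact_mod_cast congrArg (Nat.cast : ℕ → ℝ) hncard
      rw [this]
      field_simp
      norm_num
    have hΔabs : ∑ j, |Δ j| ≤ 2 * J / (M + 1) := by
      have hstep : ∀ j, |Δ j| ≤ (|((F j : ℝ)) - (M+1) * w j| + (if j = j₀ then (R:ℝ) else 0)) / (M + 1) := by
        intro j
        simp only [hΔ]
        have : (n j : ℝ) / (M + 1) - w j = (((F j : ℝ) - (M+1) * w j) + (if j = j₀ then (R:ℝ) else 0)) / (M + 1) := by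
          rw [hn]
          push_cast
          split <;> field_simp <;> ring
        rw [this, abs_div, abs_of_pos (by positivity : (0:ℝ) < M + 1)]
        apply div_le_div_of_nonneg_right ?_ (by positivity)
        · exact le_trans (abs_add_le _ _) (by
            apply add_le_add le_rfl
            split <;> simp [abs_of_nonneg, Nat.cast_nonneg])
      calc ∑ j, |Δ j| ≤ ∑ j, (|((F j : ℝ)) - (M+1) * w j| + (if j = j₀ then (R:ℝ) else 0)) / (M + 1) :=
            Finset.sum_le_sum (fun j _ => hstep j)
      _ = (∑ j, (|((F j : ℝ)) - (M+1) * w j| + (if j = j₀ then (R:ℝ) else 0))) / (M + 1) := by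
            rw [Finset.sum_div]
      _ ≤ ((J : ℝ) + (J : ℝ)) / (M + 1) := by
            apply div_le_div_of_nonneg_right ?_ (by positivity)
            rw [Finset.sum_add_distrib]
            apply add_le_add
            · calc ∑ j, |((F j : ℝ)) - (M+1) * w j| ≤ ∑ j, (1:ℝ) :=
                    Finset.sum_le_sum (fun j _ => by
                      rw [abs_le]
                      constructor
                      · have := hFgt j; linarith
                      · have := hFle_r j; linarith)
              _ = J := by simp
            · simp only [Finset.sum_ite_eq' Finset.univ j₀ (fun _ => (R:ℝ)), Finset.mem_univ, if_true]
              exact hRle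
      _ = 2 * J / (M + 1) := by ring
    -- combine
    have split : ∫ y, φ y ∂(empMeasure x) - ∫ y, φ y ∂(μ : Measure X)
        = ∑ j, Δ j * (φ (p j) - φ (p j₀)) + ∑ j, (w j * φ (p j) - ∫ y in A j, φ y ∂(μ : Measure X)) := by
      have h1 : ∑ j, Δ j * (φ (p j) - φ (p j₀)) = ∑ j, Δ j * φ (p j) - (∑ j, Δ j) * φ (p j₀) := by
        rw [Finset.sum_mul, ← Finset.sum_sub_distrib]
        exact Finset.sum_congr rfl (fun j _ => by ring)
      rw [hie, hiμ, h1, hΔsum, zero_mul, sub_zero]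
      simp only [hΔ]
      rw [← Finset.sum_add_distrib, ← Finset.sum_sub_distrib]
      exact Finset.sum_congr rfl (fun j _ => by ring)
    have bound1 : |∑ j, Δ j * (φ (p j) - φ (p j₀))| ≤ (2 * J / (M + 1)) * D := by
      calc |∑ j, Δ j * (φ (p j) - φ (p j₀))| ≤ ∑ j, |Δ j * (φ (p j) - φ (p j₀))| :=
            Finset.abs_sum_le_sum_abs _ _
      _ ≤ ∑ j, |Δ j| * D := by
            apply Finset.sum_le_sum
            intro j _
            rw [abs_mul]
            apply mul_le_mul_of_nonneg_left _ (abs_nonneg _)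
            calc |φ (p j) - φ (p j₀)| = dist (φ (p j)) (φ (p j₀)) := (Real.dist_eq _ _).symm
            _ ≤ 1 * dist (p j) (p j₀) := hφ.dist_le_mul _ _
            _ ≤ D := by
                  rw [one_mul]
                  exact Metric.dist_le_diam_of_mem isCompact_univ.isBounded trivial trivial
      _ = (∑ j, |Δ j|) * D := by rw [Finset.sum_mul]
      _ ≤ (2 * J / (M + 1)) * D := mul_le_mul_of_nonneg_right hΔabs hD0
    have bound2 : ∀ j, |w j * φ (p j) - ∫ y in A j, φ y ∂(μ : Measure X)| ≤ (δ/2) * w j := by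
      intro j
      have hconst : w j * φ (p j) = ∫ _ in A j, φ (p j) ∂(μ : Measure X) := by
        rw [setIntegral_const]
        rw [smul_eq_mul, hw]
        rfl
      rw [hconst, ← integral_sub (integrable_const _).integrableOn
        (cont_integrable hcont _).integrableOn]
      have := norm_setIntegral_le_of_norm_le_const (μ := (μ : Measure X)) (s := A j)
        (C := δ/2) (f := fun y => φ (p j) - φ y) (measure_lt_top _ _) ?bd
      case bd =>
        intro y hy
        have hmem : y ∈ Metric.ball (p j) (δ/2) := hsub j hy
        rw [Real.norm_eq_abs]
        calc |φ (p j) - φ y| = dist (φ (p j)) (φ y) := (Real.dist_eq _ _).symm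
        _ ≤ 1 * dist (p j) y := hφ.dist_le_mul _ _
        _ ≤ δ/2 := by
              rw [one_mul]
              rw [Metric.mem_ball, dist_comm] at hmem
              exact le_of_lt hmem
      rw [Real.norm_eq_abs] at this
      calc |∫ y in A j, (φ (p j) - φ y) ∂(μ : Measure X)| ≤ (δ/2) * ((μ : Measure X) (A j)).toReal := this
      _ = (δ/2) * w j := by rw [hw]
    have bound2' : |∑ j, (w j * φ (p j) - ∫ y in A j, φ y ∂(μ : Measure X))| ≤ δ/2 := by
      calc |∑ j, (w j * φ (p j) - ∫ y in A j, φ y ∂(μ : Measure X))|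
          ≤ ∑ j, |w j * φ (p j) - ∫ y in A j, φ y ∂(μ : Measure X)| := Finset.abs_sum_le_sum_abs _ _
      _ ≤ ∑ j, (δ/2) * w j := Finset.sum_le_sum (fun j _ => bound2 j)
      _ = (δ/2) * ∑ j, w j := by rw [Finset.mul_sum]
      _ = δ/2 := by rw [hwsum, mul_one]
    have hM' : (2 * J / (M + 1)) * D ≤ δ/2 := by
      have hMge : ((4 * J * (D + 1)) / δ) ≤ (M : ℝ) := by
        have := Nat.ceil_le.mp (le_refl M₁)
        have h2 : M₁ ≤ M := hM
        calc ((4 * J * (D + 1)) / δ) ≤ (M₁ : ℝ) := Nat.le_ceil _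
        _ ≤ (M : ℝ) := by exact_mod_cast h2
      have hM1pos : (0:ℝ) < M + 1 := by positivity
      rw [div_mul_eq_mul_div, div_le_iff₀ hM1pos]
      have hJ0' : (0:ℝ) < J := by exact_mod_cast hJ0
      have h3 : 4 * (J:ℝ) * (D + 1) ≤ δ * (M + 1) := by
        rw [div_le_iff₀ hδ] at hMge
        nlinarith
      nlinarith
    calc ∫ y, φ y ∂(empMeasure x) - ∫ y, φ y ∂(μ : Measure X)
        ≤ |∑ j, Δ j * (φ (p j) - φ (p j₀))| + |∑ j, (w j * φ (p j) - ∫ y in A j, φ y ∂(μ : Measure X))| := by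
          rw [split]
          exact le_trans (le_abs_self _) (abs_add_le _ _)
    _ ≤ δ/2 + δ/2 := add_le_add (le_trans bound1 hM') bound2'
    _ = δ := by ring
  -- conclude via ciSup_le
  haveI : Nonempty {f : X → ℝ // LipschitzWith 1 f} :=
    ⟨⟨fun _ => 0, (LipschitzWith.const 0).weaken zero_le_one⟩⟩
  apply ciSup_le
  rintro ⟨φ, hφ⟩
  exact key φ hφ

end Emp

section Cont
variable {X : Type*} [MetricSpace X] [CompactSpace X] [Nonempty X] [MeasurableSpace X] [BorelSpace X]

lemma f_cont_dKR (f : ProbabilityMeasure X → ℝ) (hf : Continuous f)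
    (μ : ProbabilityMeasure X) {ε : ℝ} (hε : 0 < ε) :
    ∃ δ > 0, ∀ ν : ProbabilityMeasure X,
      dKR (ν : Measure X) (μ : Measure X) ≤ δ → |f ν - f μ| ≤ ε := by
  by_contra hcon
  push_neg at hcon
  have hstep : ∀ n : ℕ, ∃ ν : ProbabilityMeasure X,
      dKR (ν : Measure X) (μ : Measure X) ≤ 1 / (n + 1) ∧ ε < |f ν - f μ| := by
    intro n
    obtain ⟨ν, hν1, hν2⟩ := hcon (1 / (n + 1)) (by positivity)
    exact ⟨ν, hν1, hν2⟩
  choose ν hν1 hν2 using hstep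
  have hd0 : Tendsto (fun n => dKR (ν n : Measure X) (μ : Measure X)) atTop (nhds 0) := by
    apply squeeze_zero
    · intro n
      exact dKR_nonneg _ _
    · exact hν1
    · exact tendsto_one_div_add_atTop_nhds_zero_nat
  have hten : Tendsto ν atTop (nhds μ) := tendsto_of_dKR hd0
  have hften : Tendsto (fun n => f (ν n)) atTop (nhds (f μ)) := (hf.tendsto μ).comp hten
  have : ∀ᶠ n in atTop, |f (ν n) - f μ| < ε := by
    have := hften.eventually (Metric.ball_mem_nhds (f μ) hε)
    apply this.mono
    intro n hn
    simpa [Real.dist_eq] using hn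
  obtain ⟨n, hn⟩ := this.exists
  exact absurd (hν2 n) (not_lt.mpr (le_of_lt hn))

end Cont

open scoped RealInnerProductSpace in
lemma norm_sq_combo {E : Type*} [NormedAddCommGroup E] [InnerProductSpace ℝ E]
    {ι : Type*} (s : Finset ι) (c : ι → ℝ) (v : ι → E) :
    ‖∑ i ∈ s, c i • v i‖ ^ 2 = ∑ i ∈ s, ∑ j ∈ s, c i * c j * ⟪v i, v j⟫ := by
  rw [← real_inner_self_eq_norm_sq]
  rw [sum_inner]
  apply Finset.sum_congr rfl
  intro i _
  rw [inner_sum]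
  apply Finset.sum_congr rfl
  intro j _
  rw [real_inner_smul_left, real_inner_smul_right]
  ring


lemma bdiv_helper (b c x : ℝ) (hb : b ≠ 0) : b * (x / (b * c)) = x / c := by
  rw [← mul_div_assoc]
  exact mul_div_mul_left x c hb


lemma sqrt_add_le'' {a b : ℝ} (ha : 0 ≤ a) (hb : 0 ≤ b) :
    Real.sqrt (a + b) ≤ Real.sqrt a + Real.sqrt b := by
  have h1 : a + b ≤ (Real.sqrt a + Real.sqrt b) ^ 2 := by
    have h2 := Real.sq_sqrt ha
    have h3 := Real.sq_sqrt hb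
    have hs : 0 ≤ Real.sqrt a * Real.sqrt b :=
      mul_nonneg (Real.sqrt_nonneg a) (Real.sqrt_nonneg b)
    nlinarith
  calc Real.sqrt (a + b) ≤ Real.sqrt ((Real.sqrt a + Real.sqrt b) ^ 2) := Real.sqrt_le_sqrt h1
  _ = Real.sqrt a + Real.sqrt b := Real.sqrt_sq (by positivity)

/-- Mean field compactness of RKHS balls. If the kernels `k_M` on `X^M` (bounded,
Lipschitz w.r.t. empirical-measure distances) converge in mean field to the kernel `k` on
`P(X)`, `f_M ∈ H_{k_M}` with `‖f_M‖ ≤ B`, and `f_M` converges in mean field to a continuous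
`f : P(X) → ℝ`, then `f` belongs to the RKHS `H_k` of `k` (i.e. is represented by some `g`)
with `‖f‖_k ≤ B`. RKHSs are realized via feature maps `Φ_M`, `Φ`. -/
theorem mean_field_rkhs_membership
    {X : Type*} [MetricSpace X] [CompactSpace X] [Nonempty X]
    [MeasurableSpace X] [BorelSpace X]
    {HM : ℕ → Type*} [∀ M, NormedAddCommGroup (HM M)] [∀ M, InnerProductSpace ℝ (HM M)]
    [∀ M, CompleteSpace (HM M)]
    (ΦM : ∀ M : ℕ, (Fin (M + 1) → X) → HM M)
    (kM : ∀ M : ℕ, (Fin (M + 1) → X) → (Fin (M + 1) → X) → ℝ)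
    (hkM : ∀ M x x', kM M x x' = ⟪ΦM M x, ΦM M x'⟫)
    {Hk : Type*} [NormedAddCommGroup Hk] [InnerProductSpace ℝ Hk] [CompleteSpace Hk]
    (Φ : ProbabilityMeasure X → Hk)
    (k : ProbabilityMeasure X → ProbabilityMeasure X → ℝ)
    (hkk : ∀ μ ν, k μ ν = ⟪Φ μ, Φ ν⟫)
    (hdense : Dense (Submodule.span ℝ (Set.range Φ) : Set Hk))
    (C_k L_k : ℝ)
    (hbdM : ∀ M x x', |kM M x x'| ≤ C_k)
    (hbdk : ∀ μ ν, |k μ ν| ≤ C_k)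
    (hLipM : ∀ M (x₁ x₁' x₂ x₂' : Fin (M + 1) → X),
      |kM M x₁ x₁' - kM M x₂ x₂'| ≤
        L_k * (dKR (empMeasure x₁) (empMeasure x₂) + dKR (empMeasure x₁') (empMeasure x₂')))
    (hLipk : ∀ μ₁ μ₁' μ₂ μ₂' : ProbabilityMeasure X,
      |k μ₁ μ₁' - k μ₂ μ₂'| ≤
        L_k * (dKR (μ₁ : Measure X) (μ₂ : Measure X) + dKR (μ₁' : Measure X) (μ₂' : Measure X)))
    (hMF : ∀ ε : ℝ, 0 < ε → ∃ M₀ : ℕ, ∀ M ≥ M₀, ∀ x x' : Fin (M + 1) → X,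
      |kM M x x' - k (empProb x) (empProb x')| ≤ ε)
    (B : ℝ) (hB0 : 0 ≤ B) (fM : ∀ M, HM M) (hB : ∀ M, ‖fM M‖ ≤ B)
    (f : ProbabilityMeasure X → ℝ) (hf : Continuous f)
    (hfMF : ∀ ε : ℝ, 0 < ε → ∃ M₀ : ℕ, ∀ M ≥ M₀, ∀ x : Fin (M + 1) → X,
      |⟪fM M, ΦM M x⟫ - f (empProb x)| ≤ ε) :
    ∃ g : Hk, (∀ μ, f μ = ⟪g, Φ μ⟫) ∧ ‖g‖ ≤ B := by
  classical
  set ρ : (ProbabilityMeasure X →₀ ℝ) →ₗ[ℝ] Hk := Finsupp.linearCombination ℝ Φ with hρ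
  set e : (ProbabilityMeasure X →₀ ℝ) →ₗ[ℝ] ℝ := Finsupp.linearCombination ℝ f with he
  have KEY : ∀ c : ProbabilityMeasure X →₀ ℝ, |e c| ≤ B * ‖ρ c‖ := by
    intro c
    have hec : e c = ∑ μ ∈ c.support, c μ * f μ := by
      rw [he, Finsupp.linearCombination_apply, Finsupp.sum]
      simp [smul_eq_mul]
    have hρc : ρ c = ∑ μ ∈ c.support, c μ • Φ μ := by
      rw [hρ, Finsupp.linearCombination_apply, Finsupp.sum]
    set s := c.support with hs
    set Cs : ℝ := ∑ μ ∈ s, |c μ| with hCs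
    have hCs0 : 0 ≤ Cs := Finset.sum_nonneg (fun μ _ => abs_nonneg _)
    rw [hec, hρc]
    apply le_of_forall_pos_le_add
    intro ε hε
    set ε₁ : ℝ := ε / (4 * (Cs + 1)) with hε₁
    have hε₁0 : 0 < ε₁ := by positivity
    set η : ℝ := (ε / (2 * (B + 1))) ^ 2 with hη
    have hη0 : 0 < η := by positivity
    set ε₃ : ℝ := η / (2 * (Cs ^ 2 + 1)) with hε₃
    have hε₃0 : 0 < ε₃ := by positivity
    set δ₄ : ℝ := η / (4 * (Cs ^ 2 + 1) * (|L_k| + 1)) with hδ₄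
    have hδ₄0 : 0 < δ₄ := by positivity
    have hFc : ∀ μ : ProbabilityMeasure X, ∃ δ > 0, ∀ ν : ProbabilityMeasure X,
        dKR (ν : Measure X) (μ : Measure X) ≤ δ → |f ν - f μ| ≤ ε₁ :=
      fun μ => f_cont_dKR f hf μ hε₁0
    choose δf hδfpos hδf using hFc
    have hEc : ∀ μ : ProbabilityMeasure X, ∃ M₁ : ℕ, ∀ M ≥ M₁, ∃ x : Fin (M + 1) → X,
        dKR (empMeasure x) (μ : Measure X) ≤ min (δf μ) δ₄ :=
      fun μ => emp_approx μ (lt_min (hδfpos μ) hδ₄0)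
    choose M₁f hM₁f using hEc
    obtain ⟨Ma, hMa⟩ := hfMF ε₁ hε₁0
    obtain ⟨Mb, hMb⟩ := hMF ε₃ hε₃0
    set M := max Ma (max Mb (s.sup M₁f)) with hMdef
    have hMa' : M ≥ Ma := le_max_left _ _
    have hMb' : M ≥ Mb := le_trans (le_max_left _ _) (le_max_right _ _)
    have hMs : ∀ μ ∈ s, M ≥ M₁f μ := fun μ hμ =>
      le_trans (le_trans (Finset.le_sup hμ) (le_max_right _ _)) (le_max_right _ _)
    have hxex : ∀ μ : ProbabilityMeasure X, ∃ x : Fin (M + 1) → X,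
        μ ∈ s → dKR (empMeasure x) (μ : Measure X) ≤ min (δf μ) δ₄ := by
      intro μ
      by_cases hμ : μ ∈ s
      · obtain ⟨x, hx⟩ := hM₁f μ M (hMs μ hμ)
        exact ⟨x, fun _ => hx⟩
      · exact ⟨fun _ => Classical.arbitrary X, fun h => absurd h hμ⟩
    choose xf hxf using hxex
    have hdnn : ∀ μ : ProbabilityMeasure X, 0 ≤ dKR (empMeasure (xf μ)) (μ : Measure X) := by
      intro μ
      haveI := empMeasure_prob (xf μ)
      exact dKR_nonneg _ _
    have hfa : ∀ μ ∈ s, |f μ - f (empProb (xf μ))| ≤ ε₁ := by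
      intro μ hμ
      have h := hδf μ (empProb (xf μ)) (le_trans (hxf μ hμ) (min_le_left _ _))
      rw [abs_sub_comm]
      exact h
    have hfb : ∀ μ : ProbabilityMeasure X, |⟪fM M, ΦM M (xf μ)⟫ - f (empProb (xf μ))| ≤ ε₁ :=
      fun μ => hMa M hMa' (xf μ)
    have step1 : |∑ μ ∈ s, c μ * f μ - ∑ μ ∈ s, c μ * ⟪fM M, ΦM M (xf μ)⟫| ≤ 2 * Cs * ε₁ := by
      rw [← Finset.sum_sub_distrib]
      calc |∑ μ ∈ s, (c μ * f μ - c μ * ⟪fM M, ΦM M (xf μ)⟫)|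
          ≤ ∑ μ ∈ s, |c μ * f μ - c μ * ⟪fM M, ΦM M (xf μ)⟫| := Finset.abs_sum_le_sum_abs _ _
      _ ≤ ∑ μ ∈ s, |c μ| * (2 * ε₁) := by
            apply Finset.sum_le_sum
            intro μ hμ
            rw [← mul_sub, abs_mul]
            apply mul_le_mul_of_nonneg_left _ (abs_nonneg _)
            have h1 := hfa μ hμ
            have h2 := hfb μ
            calc |f μ - ⟪fM M, ΦM M (xf μ)⟫|
                ≤ |f μ - f (empProb (xf μ))| + |f (empProb (xf μ)) - ⟪fM M, ΦM M (xf μ)⟫| :=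
                  abs_sub_le _ _ _
            _ ≤ ε₁ + ε₁ := add_le_add h1 (by rw [abs_sub_comm]; exact h2)
            _ = 2 * ε₁ := by ring
      _ = 2 * Cs * ε₁ := by rw [← Finset.sum_mul]; ring
    have step2 : |∑ μ ∈ s, c μ * ⟪fM M, ΦM M (xf μ)⟫| ≤ B * ‖∑ μ ∈ s, c μ • ΦM M (xf μ)‖ := by
      have hin : ⟪fM M, ∑ μ ∈ s, c μ • ΦM M (xf μ)⟫ = ∑ μ ∈ s, c μ * ⟪fM M, ΦM M (xf μ)⟫ := by
        rw [inner_sum]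
        exact Finset.sum_congr rfl (fun μ _ => real_inner_smul_right _ _ _)
      rw [← hin]
      calc |⟪fM M, ∑ μ ∈ s, c μ • ΦM M (xf μ)⟫| ≤ ‖fM M‖ * ‖∑ μ ∈ s, c μ • ΦM M (xf μ)‖ :=
            abs_real_inner_le_norm _ _
      _ ≤ B * ‖∑ μ ∈ s, c μ • ΦM M (xf μ)‖ :=
            mul_le_mul_of_nonneg_right (hB M) (norm_nonneg _)
    have hkMc : ∀ μ ν : ProbabilityMeasure X, μ ∈ s → ν ∈ s →
        |kM M (xf μ) (xf ν) - k μ ν| ≤ ε₃ + 2 * |L_k| * δ₄ := by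
      intro μ ν hμ hν
      have h1 := hMb M hMb' (xf μ) (xf ν)
      have h2 := hLipk (empProb (xf μ)) (empProb (xf ν)) μ ν
      have hd1 : dKR ((empProb (xf μ)) : Measure X) (μ : Measure X) ≤ δ₄ :=
        le_trans (hxf μ hμ) (min_le_right _ _)
      have hd2 : dKR ((empProb (xf ν)) : Measure X) (ν : Measure X) ≤ δ₄ :=
        le_trans (hxf ν hν) (min_le_right _ _)
      have h2' : |k (empProb (xf μ)) (empProb (xf ν)) - k μ ν| ≤ 2 * |L_k| * δ₄ := by
        calc |k (empProb (xf μ)) (empProb (xf ν)) - k μ ν|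
            ≤ L_k * (dKR ((empProb (xf μ)) : Measure X) (μ : Measure X)
              + dKR ((empProb (xf ν)) : Measure X) (ν : Measure X)) := h2
        _ ≤ |L_k| * (dKR ((empProb (xf μ)) : Measure X) (μ : Measure X)
              + dKR ((empProb (xf ν)) : Measure X) (ν : Measure X)) :=
              mul_le_mul_of_nonneg_right (le_abs_self _) (add_nonneg (hdnn μ) (hdnn ν))
        _ ≤ |L_k| * (δ₄ + δ₄) :=
              mul_le_mul_of_nonneg_left (add_le_add hd1 hd2) (abs_nonneg _)
        _ = 2 * |L_k| * δ₄ := by ring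
      calc |kM M (xf μ) (xf ν) - k μ ν|
          ≤ |kM M (xf μ) (xf ν) - k (empProb (xf μ)) (empProb (xf ν))|
            + |k (empProb (xf μ)) (empProb (xf ν)) - k μ ν| := abs_sub_le _ _ _
      _ ≤ ε₃ + 2 * |L_k| * δ₄ := add_le_add h1 h2'
    have hNsq : ‖∑ μ ∈ s, c μ • ΦM M (xf μ)‖ ^ 2
        = ∑ μ ∈ s, ∑ ν ∈ s, c μ * c ν * kM M (xf μ) (xf ν) := by
      rw [norm_sq_combo]
      exact Finset.sum_congr rfl (fun μ _ => Finset.sum_congr rfl (fun ν _ => by rw [hkM]))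
    have hGsq : ‖∑ μ ∈ s, c μ • Φ μ‖ ^ 2 = ∑ μ ∈ s, ∑ ν ∈ s, c μ * c ν * k μ ν := by
      rw [norm_sq_combo]
      exact Finset.sum_congr rfl (fun μ _ => Finset.sum_congr rfl (fun ν _ => by rw [hkk]))
    have hκη : Cs ^ 2 * (ε₃ + 2 * |L_k| * δ₄) ≤ η := by
      have h2 : (0:ℝ) < Cs ^ 2 + 1 := by positivity
      have h3 : (0:ℝ) < |L_k| + 1 := by positivity
      have hε₃' : ε₃ = η / ((Cs ^ 2 + 1) * 2) := by rw [hε₃]; ring_nf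
      have e1 : Cs ^ 2 * ε₃ ≤ η / 2 := by
        calc Cs ^ 2 * ε₃ ≤ (Cs ^ 2 + 1) * ε₃ :=
              mul_le_mul_of_nonneg_right (by linarith) (le_of_lt hε₃0)
        _ = η / 2 := by rw [hε₃']; exact bdiv_helper _ 2 η (ne_of_gt h2)
      have hb2 : (0:ℝ) < (Cs ^ 2 + 1) * (|L_k| + 1) := by positivity
      have hδ₄' : δ₄ = η / (((Cs ^ 2 + 1) * (|L_k| + 1)) * 4) := by rw [hδ₄]; ring_nf
      have e2 : Cs ^ 2 * (2 * |L_k| * δ₄) ≤ η / 2 := by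
        calc Cs ^ 2 * (2 * |L_k| * δ₄) = (Cs ^ 2 * (2 * |L_k|)) * δ₄ := by ring
        _ ≤ ((Cs ^ 2 + 1) * (2 * (|L_k| + 1))) * δ₄ := by
              apply mul_le_mul_of_nonneg_right _ (le_of_lt hδ₄0)
              have := abs_nonneg L_k
              nlinarith
        _ = 2 * (((Cs ^ 2 + 1) * (|L_k| + 1)) * (η / (((Cs ^ 2 + 1) * (|L_k| + 1)) * 4))) := by
              rw [hδ₄']; ring
        _ = 2 * (η / 4) := by rw [bdiv_helper _ 4 η (ne_of_gt hb2)]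
        _ = η / 2 := by ring
      calc Cs ^ 2 * (ε₃ + 2 * |L_k| * δ₄) = Cs ^ 2 * ε₃ + Cs ^ 2 * (2 * |L_k| * δ₄) := by ring
      _ ≤ η / 2 + η / 2 := add_le_add e1 e2
      _ = η := by ring
    have hcomp : ‖∑ μ ∈ s, c μ • ΦM M (xf μ)‖ ^ 2 ≤ ‖∑ μ ∈ s, c μ • Φ μ‖ ^ 2 + η := by
      rw [hNsq, hGsq]
      have expand : Cs ^ 2 * (ε₃ + 2 * |L_k| * δ₄)
          = ∑ μ ∈ s, ∑ ν ∈ s, |c μ| * |c ν| * (ε₃ + 2 * |L_k| * δ₄) := by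
        rw [hCs, pow_two, Finset.sum_mul_sum, Finset.sum_mul]
        refine Finset.sum_congr rfl fun μ _ => ?_
        rw [Finset.sum_mul]
      have hdiff : |∑ μ ∈ s, ∑ ν ∈ s, c μ * c ν * kM M (xf μ) (xf ν)
          - ∑ μ ∈ s, ∑ ν ∈ s, c μ * c ν * k μ ν| ≤ Cs ^ 2 * (ε₃ + 2 * |L_k| * δ₄) := by
        rw [← Finset.sum_sub_distrib, expand]
        calc |∑ μ ∈ s, (∑ ν ∈ s, c μ * c ν * kM M (xf μ) (xf ν) - ∑ ν ∈ s, c μ * c ν * k μ ν)|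
            ≤ ∑ μ ∈ s, |∑ ν ∈ s, c μ * c ν * kM M (xf μ) (xf ν) - ∑ ν ∈ s, c μ * c ν * k μ ν| :=
              Finset.abs_sum_le_sum_abs _ _
        _ ≤ ∑ μ ∈ s, ∑ ν ∈ s, |c μ| * |c ν| * (ε₃ + 2 * |L_k| * δ₄) := by
              apply Finset.sum_le_sum
              intro μ hμ
              rw [← Finset.sum_sub_distrib]
              calc |∑ ν ∈ s, (c μ * c ν * kM M (xf μ) (xf ν) - c μ * c ν * k μ ν)|
                  ≤ ∑ ν ∈ s, |c μ * c ν * kM M (xf μ) (xf ν) - c μ * c ν * k μ ν| :=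
                    Finset.abs_sum_le_sum_abs _ _
              _ ≤ ∑ ν ∈ s, |c μ| * |c ν| * (ε₃ + 2 * |L_k| * δ₄) := by
                    apply Finset.sum_le_sum
                    intro ν hν
                    have hrw : c μ * c ν * kM M (xf μ) (xf ν) - c μ * c ν * k μ ν
                        = (c μ * c ν) * (kM M (xf μ) (xf ν) - k μ ν) := by ring
                    rw [hrw, abs_mul, abs_mul]
                    exact mul_le_mul_of_nonneg_left (hkMc μ ν hμ hν)
                      (mul_nonneg (abs_nonneg _) (abs_nonneg _))
      have := abs_le.mp hdiff
      linarith [hκη, this.2]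
    have hnorm : ‖∑ μ ∈ s, c μ • ΦM M (xf μ)‖ ≤ ‖∑ μ ∈ s, c μ • Φ μ‖ + ε / (2 * (B + 1)) := by
      have hN0 : (0:ℝ) ≤ ‖∑ μ ∈ s, c μ • ΦM M (xf μ)‖ := norm_nonneg _
      have hG0 : (0:ℝ) ≤ ‖∑ μ ∈ s, c μ • Φ μ‖ := norm_nonneg _
      calc ‖∑ μ ∈ s, c μ • ΦM M (xf μ)‖
          = Real.sqrt (‖∑ μ ∈ s, c μ • ΦM M (xf μ)‖ ^ 2) := (Real.sqrt_sq hN0).symm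
      _ ≤ Real.sqrt (‖∑ μ ∈ s, c μ • Φ μ‖ ^ 2 + η) := Real.sqrt_le_sqrt hcomp
      _ ≤ Real.sqrt (‖∑ μ ∈ s, c μ • Φ μ‖ ^ 2) + Real.sqrt η :=
            sqrt_add_le'' (by positivity) (le_of_lt hη0)
      _ = ‖∑ μ ∈ s, c μ • Φ μ‖ + ε / (2 * (B + 1)) := by
            rw [Real.sqrt_sq hG0, hη, Real.sqrt_sq (by positivity)]
    have hε₁' : ε₁ = ε / ((Cs + 1) * 4) := by rw [hε₁]; ring_nf
    have hε₁0' : 0 ≤ ε₁ := le_of_lt hε₁0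
    have hfinal1 : 2 * Cs * ε₁ ≤ ε / 2 := by
      calc 2 * Cs * ε₁ ≤ 2 * (Cs + 1) * ε₁ := by nlinarith
      _ = 2 * ((Cs + 1) * (ε / ((Cs + 1) * 4))) := by rw [hε₁']; ring
      _ = 2 * (ε / 4) := by rw [bdiv_helper _ 4 ε (by positivity)]
      _ = ε / 2 := by ring
    have hfinal2 : B * (ε / (2 * (B + 1))) ≤ ε / 2 := by
      have hB1 : (0:ℝ) < B + 1 := by linarith
      have hx : (0:ℝ) ≤ ε / (2 * (B + 1)) := by positivity
      calc B * (ε / (2 * (B + 1))) ≤ (B + 1) * (ε / (2 * (B + 1))) := by nlinarith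
      _ = (B + 1) * (ε / ((B + 1) * 2)) := by ring_nf
      _ = ε / 2 := bdiv_helper _ 2 ε (ne_of_gt hB1)
    have habs := abs_le.mp step1
    calc |∑ μ ∈ s, c μ * f μ|
        ≤ |∑ μ ∈ s, c μ * ⟪fM M, ΦM M (xf μ)⟫| + 2 * Cs * ε₁ := by
          have := abs_sub_le (∑ μ ∈ s, c μ * f μ) (∑ μ ∈ s, c μ * ⟪fM M, ΦM M (xf μ)⟫) 0
          simp only [sub_zero] at this
          linarith [step1, abs_sub_abs_le_abs_sub (∑ μ ∈ s, c μ * f μ)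
            (∑ μ ∈ s, c μ * ⟪fM M, ΦM M (xf μ)⟫)]
    _ ≤ B * ‖∑ μ ∈ s, c μ • ΦM M (xf μ)‖ + 2 * Cs * ε₁ := by linarith [step2]
    _ ≤ B * (‖∑ μ ∈ s, c μ • Φ μ‖ + ε / (2 * (B + 1))) + 2 * Cs * ε₁ := by
          have := mul_le_mul_of_nonneg_left hnorm hB0
          linarith
    _ ≤ B * ‖∑ μ ∈ s, c μ • Φ μ‖ + ε := by
          have : B * (‖∑ μ ∈ s, c μ • Φ μ‖ + ε / (2 * (B + 1)))
              = B * ‖∑ μ ∈ s, c μ • Φ μ‖ + B * (ε / (2 * (B + 1))) := by ring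
          linarith [hfinal1, hfinal2]
  -- functional-analytic glue
  have hker : LinearMap.ker ρ ≤ LinearMap.ker e := by
    intro c hc
    rw [LinearMap.mem_ker] at hc ⊢
    have h := KEY c
    rw [hc, norm_zero, mul_zero] at h
    exact abs_eq_zero.mp (le_antisymm h (abs_nonneg _))
  set T : LinearMap.range ρ →ₗ[ℝ] ℝ :=
    (Submodule.liftQ (LinearMap.ker ρ) e hker).comp ρ.quotKerEquivRange.symm.toLinearMap with hT
  have hTval : ∀ (c : ProbabilityMeasure X →₀ ℝ) (h : ρ c ∈ LinearMap.range ρ),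
      T ⟨ρ c, h⟩ = e c := by
    intro c h
    rw [hT]
    simp only [LinearMap.coe_comp, Function.comp_apply, LinearEquiv.coe_coe]
    rw [LinearMap.quotKerEquivRange_symm_apply_image]
    simp [Submodule.liftQ_apply, Submodule.mkQ_apply]
  have hTb : ∀ h : LinearMap.range ρ, ‖T h‖ ≤ B * ‖h‖ := by
    rintro ⟨v, hv⟩
    obtain ⟨c, hc⟩ := LinearMap.mem_range.mp hv
    subst hc
    rw [hTval c hv]
    rw [Real.norm_eq_abs]
    exact KEY c
  set Tc : LinearMap.range ρ →L[ℝ] ℝ := LinearMap.mkContinuous T B hTb with hTc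
  have hTcnorm : ‖Tc‖ ≤ B := LinearMap.mkContinuous_norm_le _ hB0 _
  set incl : LinearMap.range ρ →L[ℝ] Hk := (LinearMap.range ρ).subtypeL with hincl
  have hinclcoe : ⇑incl = (Subtype.val : LinearMap.range ρ → Hk) := rfl
  have hdr : DenseRange (⇑incl) := by
    rw [DenseRange, hinclcoe, Subtype.range_coe]
    have hrr : (LinearMap.range ρ : Set Hk) = (Submodule.span ℝ (Set.range Φ) : Set Hk) := by
      rw [hρ, Finsupp.range_linearCombination]
    rw [hrr]
    exact hdense
  have hui : IsUniformInducing (⇑incl) := by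
    rw [hinclcoe]
    exact isometry_subtype_coe.isUniformInducing
  set E := Tc.extend incl with hE
  have hEnorm : ‖E‖ ≤ B := by
    have h1 : ∀ x : LinearMap.range ρ, ‖x‖ ≤ ((1:ℝ≥0) : ℝ) * ‖incl x‖ := by
      intro x
      simp [hinclcoe]
    have h2 := Tc.opNorm_extend_le (e := incl) hdr h1
    calc ‖E‖ ≤ ((1:ℝ≥0) : ℝ) * ‖Tc‖ := h2
    _ = ‖Tc‖ := by norm_num
    _ ≤ B := hTcnorm
  have hEag : ∀ x : LinearMap.range ρ, E (incl x) = Tc x := by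
    intro x
    exact ContinuousLinearMap.extend_eq Tc (e := incl) hdr hui x
  refine ⟨(InnerProductSpace.toDual ℝ Hk).symm E, ?_, ?_⟩
  · intro μ
    have hmem : Φ μ ∈ LinearMap.range ρ := by
      refine ⟨Finsupp.single μ 1, ?_⟩
      rw [hρ, Finsupp.linearCombination_single, one_smul]
    have h1 : ⟪(InnerProductSpace.toDual ℝ Hk).symm E, Φ μ⟫ = E (Φ μ) :=
      InnerProductSpace.toDual_symm_apply
    rw [h1]
    have h2 : E (Φ μ) = Tc ⟨Φ μ, hmem⟩ := hEag ⟨Φ μ, hmem⟩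
    rw [h2]
    have h3 : Tc (⟨Φ μ, hmem⟩ : LinearMap.range ρ) = T ⟨Φ μ, hmem⟩ := rfl
    rw [h3]
    have hmem' : ρ (Finsupp.single μ 1) ∈ LinearMap.range ρ := ⟨Finsupp.single μ 1, rfl⟩
    have h4 : (⟨Φ μ, hmem⟩ : LinearMap.range ρ) = ⟨ρ (Finsupp.single μ 1), hmem'⟩ := by
      apply Subtype.ext
      show Φ μ = ρ (Finsupp.single μ 1)
      rw [hρ, Finsupp.linearCombination_single, one_smul]
    rw [h4, hTval]
    rw [he, Finsupp.linearCombination_single, one_smul]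
  · rw [LinearIsometryEquiv.norm_map]
    exact hEnorm
end
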